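/- Let 𝔡 be a finite-dimensional Lie algebra with invariant β ∈ S²𝔡, and 𝔡̂ = 𝔡 ⋉ 𝔡*_β with the bilinear form β̂ as above. Then the subspace (𝔡*_β)^⊥ (orthogonal complement of 0 ⊕ 𝔡*_β with respect to β̂) is a Lie algebra ideal of 𝔡̂ complementary to 𝔡 ⊕ 0, and the projection f̂ : 𝔡̂ → 𝔡 with kernel (𝔡*_β)^⊥, given explicitly by f̂(ξ, μ) = ξ + β^♯(μ), is a Lie algebra homomorphism. -/
import Mathlib


open Module LieAlgebra

/-- In `𝔡̂ = 𝔡 ⋉ 𝔡*_β` with bilinear form `β̂`, the orthogonal complement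
`(𝔡*_β)^⊥` of `0 ⊕ 𝔡*_β` (here `P x := ∀ ν, β̂(x,(0,ν)) = 0`) is a Lie algebra
ideal complementary to `𝔡 ⊕ 0`, and the projection `f̂(ξ,μ) = ξ + β^♯(μ)` along
it is a Lie algebra homomorphism `𝔡̂ → 𝔡` with kernel `(𝔡*_β)^⊥`. -/
theorem dual_perp_ideal_and_projection {K D : Type*} [Field K]
    [LieRing D] [LieAlgebra K D] [FiniteDimensional K D]
    (Bs : Module.Dual K D →ₗ[K] D)
    (hsymm : ∀ μ ν : Module.Dual K D, μ (Bs ν) = ν (Bs μ))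
    (hinv : ∀ (ξ : D) (μ : Module.Dual K D),
      Bs (μ ∘ₗ LieAlgebra.ad K D ξ) = -⁅ξ, Bs μ⁆)
    (br : Module.Dual K D → Module.Dual K D → Module.Dual K D)
    (hbr : ∀ (μ₁ μ₂ : Module.Dual K D) (ξ : D), br μ₁ μ₂ ξ = μ₂ ⁅ξ, Bs μ₁⁆)
    (Br : (D × Module.Dual K D) → (D × Module.Dual K D) → (D × Module.Dual K D))
    (hBr : ∀ x y : D × Module.Dual K D,
      Br x y = (⁅x.1, y.1⁆,
        -(y.2 ∘ₗ LieAlgebra.ad K D x.1) + (x.2 ∘ₗ LieAlgebra.ad K D y.1)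
          + br x.2 y.2))
    (hatβ : (D × Module.Dual K D) → (D × Module.Dual K D) → K)
    (hβ : ∀ x y : D × Module.Dual K D,
      hatβ x y = x.2 (Bs y.2) + x.2 y.1 + y.2 x.1)
    (P : (D × Module.Dual K D) → Prop)
    (hP : ∀ x, P x ↔ ∀ ν : Module.Dual K D, hatβ x ((0 : D), ν) = 0)
    (fhat : (D × Module.Dual K D) → D)
    (hfhat : ∀ x, fhat x = x.1 + Bs x.2) :
    -- (𝔡*_β)^⊥ is an ideal
    (∀ x y : D × Module.Dual K D, P y → P (Br x y) ∧ P (Br y x)) ∧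
    -- it is complementary to 𝔡 ⊕ 0
    (∀ x : D × Module.Dual K D,
      ∃ (ξ : D) (y : D × Module.Dual K D), P y ∧ x = (ξ, (0 : Module.Dual K D)) + y) ∧
    (∀ ξ : D, P (ξ, (0 : Module.Dual K D)) → ξ = 0) ∧
    -- f̂ is a Lie algebra homomorphism
    (∀ x y : D × Module.Dual K D, fhat (Br x y) = ⁅fhat x, fhat y⁆) ∧
    -- f̂ is the projection onto 𝔡 with kernel (𝔡*_β)^⊥
    (∀ ξ : D, fhat (ξ, (0 : Module.Dual K D)) = ξ) ∧
    (∀ x : D × Module.Dual K D, fhat x = 0 ↔ P x) := by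

  -- key: f̂ is a Lie homomorphism
  have hom : ∀ x y : D × Module.Dual K D, fhat (Br x y) = ⁅fhat x, fhat y⁆ := by
    intro x y
    have hbr' : br x.2 y.2 = -(y.2 ∘ₗ LieAlgebra.ad K D (Bs x.2)) := by
      ext ξ
      simp only [hbr, LinearMap.neg_apply, LinearMap.coe_comp, Function.comp_apply,
        LieAlgebra.ad_apply]
      rw [← lie_skew, map_neg]
    rw [hBr, hfhat, hfhat, hfhat]
    simp only [map_add, map_neg, hbr', hinv]
    simp only [lie_add, add_lie, neg_neg]
    rw [show -⁅y.1, Bs x.2⁆ = ⁅Bs x.2, y.1⁆ from lie_skew _ _]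
    abel
  -- key: kernel of f̂ is P
  have hker : ∀ x : D × Module.Dual K D, fhat x = 0 ↔ P x := by
    intro x
    rw [hP, hfhat]
    constructor
    · intro h ν
      have h2 : ν x.1 + ν (Bs x.2) = 0 := by rw [← map_add, h, map_zero]
      rw [hβ]
      simp only [map_zero, add_zero, hsymm x.2 ν]
      linear_combination h2
    · intro h
      rw [← Module.forall_dual_apply_eq_zero_iff K]
      intro ν
      have h1 := h ν
      rw [hβ] at h1
      simp only [map_zero, add_zero] at h1
      rw [map_add, ← hsymm x.2 ν]
      linear_combination h1
  refine ⟨?_, ?_, ?_, hom, ?_, fun x => hker x⟩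
  · intro x y hy
    constructor
    · rw [← hker, hom]
      rw [← hker] at hy
      rw [hy, lie_zero]
    · rw [← hker, hom]
      rw [← hker] at hy
      rw [hy, zero_lie]
  · intro x
    refine ⟨fhat x, (-(Bs x.2), x.2), ?_, ?_⟩
    · rw [← hker, hfhat]
      simp
    · rw [hfhat]
      ext <;> simp
  · intro ξ hξ
    rw [← hker, hfhat] at hξ
    simpa using hξ
  · intro ξ
    rw [hfhat]
    simp
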